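/- Every FAM mechanism is individually rational, maximal, and fair for unassigned students: starting from a maximal individually rational matching and iteratively resolving priority violations by unassigned students (placing the violating unassigned student at the school and removing the lowest-priority student currently assigned there), the procedure terminates in finitely many steps with a matching that is individually rational, maximal, and admits no pair (i,s) with i unassigned, s acceptable to i, and i having higher priority at s than some student matched to s. -/
import Mathlib


open Finset
open scoped Classical

/-- A matching assigns each student a school or `none` (unassigned). -/
abbrev Matching (I S : Type*) := I → Option S

/-- An individual strict preference over `S ∪ {∅}`: an injective utility
function on `Option S` (higher value = more preferred, `none` = being
unassigned). -/
abbrev IndPref (S : Type*) := {f : Option S → ℕ // Function.Injective f}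

/-- A preference profile: one strict preference per student. -/
abbrev Prof (I S : Type*) := I → IndPref S

/-- Strict school priorities: for each school, an injective rank over
students (higher value = higher priority). -/
abbrev Prio (I S : Type*) := {p : S → I → ℕ // ∀ s, Function.Injective (p s)}

/-- A mechanism maps reported preference profiles to matchings. -/
abbrev Mechanism (I S : Type*) := Prof I S → Matching I S

variable {I S : Type*} [Fintype I] [DecidableEq I] [Fintype S] [DecidableEq S]

/-- Capacity feasibility. -/
def Feasible (q : S → ℕ) (μ : Matching I S) : Prop :=
  ∀ s : S, (univ.filter fun i => μ i = some s).card ≤ q s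

/-- Individual rationality with respect to profile `P`. -/
def IndivRational (P : Prof I S) (μ : Matching I S) : Prop :=
  ∀ i, (P i).1 none ≤ (P i).1 (μ i)

/-- Number of assigned students. -/
def msize (μ : Matching I S) : ℕ := (univ.filter fun i => μ i ≠ none).card

/-- Maximality: no feasible individually rational matching assigns strictly
more students. -/
def MaximalMatching (P : Prof I S) (q : S → ℕ) (μ : Matching I S) : Prop :=
  ∀ μ' : Matching I S, Feasible q μ' → IndivRational P μ' → msize μ' ≤ msize μ

/-- `μ'` Pareto dominates `μ`. -/
def Dominates (P : Prof I S) (μ' μ : Matching I S) : Prop :=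
  (∀ i, (P i).1 (μ i) ≤ (P i).1 (μ' i)) ∧ ∃ j, (P j).1 (μ j) < (P j).1 (μ' j)

/-- Pareto efficiency among feasible individually rational matchings. -/
def Efficient (P : Prof I S) (q : S → ℕ) (μ : Matching I S) : Prop :=
  ¬ ∃ μ', Feasible q μ' ∧ IndivRational P μ' ∧ Dominates P μ' μ

/-- Non-wastefulness. -/
def NonWasteful (P : Prof I S) (q : S → ℕ) (μ : Matching I S) : Prop :=
  ∀ i s, (P i).1 (μ i) < (P i).1 (some s) →
    (univ.filter fun j => μ j = some s).card = q s

/-- Fairness (no justified envy). -/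
def Fair (P : Prof I S) (pr : Prio I S) (μ : Matching I S) : Prop :=
  ¬ ∃ i s j, (P i).1 (μ i) < (P i).1 (some s) ∧ μ j = some s ∧ pr.1 s j < pr.1 s i

/-- Stability: individually rational, non-wasteful and fair. -/
def Stable (P : Prof I S) (pr : Prio I S) (q : S → ℕ) (μ : Matching I S) : Prop :=
  Feasible q μ ∧ IndivRational P μ ∧ NonWasteful P q μ ∧ Fair P pr μ

/-- Fairness for unassigned students. -/
def FairForUnassigned (P : Prof I S) (pr : Prio I S) (μ : Matching I S) : Prop :=
  ¬ ∃ i s j, μ i = none ∧ (P i).1 none < (P i).1 (some s) ∧ μ j = some s ∧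
    pr.1 s j < pr.1 s i

/-- `(a, t)` is an improving chain for `μ`: each student `a k` strictly
prefers `t k` to their assignment, each school `t k` (for `k < n`) is
currently occupied by the next student `a (k+1)`, and the last school has
excess capacity. -/
def IsImpChain (P : Prof I S) (q : S → ℕ) (μ : Matching I S)
    (n : ℕ) (a : Fin (n + 1) → I) (t : Fin (n + 1) → S) : Prop :=
  Function.Injective a ∧
  (∀ k, (P (a k)).1 (μ (a k)) < (P (a k)).1 (some (t k))) ∧
  (∀ k : Fin n, μ (a k.succ) = some (t k.castSucc)) ∧
  (univ.filter fun j => μ j = some (t (Fin.last n))).card < q (t (Fin.last n))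

/-- `(a, t)` is an improving cycle for `μ`: each student `a k` is assigned
to `t k` and strictly prefers the school `t (k+1)` vacated by the next
student in the cycle. -/
def IsImpCycle (P : Prof I S) (μ : Matching I S)
    (n : ℕ) (a : Fin (n + 1) → I) (t : Fin (n + 1) → S) : Prop :=
  Function.Injective a ∧
  (∀ k, μ (a k) = some (t k)) ∧
  (∀ k, (P (a k)).1 (some (t k)) < (P (a k)).1 (some (t (k + 1))))

def HasImpChain (P : Prof I S) (q : S → ℕ) (μ : Matching I S) : Prop :=
  ∃ n a t, IsImpChain P q μ n a t

def HasImpCycle (P : Prof I S) (μ : Matching I S) : Prop :=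
  ∃ n a t, IsImpCycle P μ n a t

/-- Implementing one improving chain or cycle: every student involved moves
to the school they prefer in the chain/cycle, all others keep their
assignment. -/
def ImplementStep (P : Prof I S) (q : S → ℕ) (μ μ' : Matching I S) : Prop :=
  (∃ n a t, IsImpChain P q μ n a t ∧ (∀ k, μ' (a k) = some (t k)) ∧
    ∀ j, (∀ k, j ≠ a k) → μ' j = μ j) ∨
  (∃ n a t, IsImpCycle P μ n a t ∧ (∀ k, μ' (a k) = some (t (k + 1))) ∧
    ∀ j, (∀ k, j ≠ a k) → μ' j = μ j)

/-- One refinement step of the first stage of EAM: keep only the matchings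
assigning student `i`, whenever such matchings exist. -/
noncomputable def xiStep (A : Set (Matching I S)) (i : I) : Set (Matching I S) :=
  if ∃ μ ∈ A, μ i ≠ none then {μ ∈ A | μ i ≠ none} else A

/-- The set `ξ^n` of the first stage of EAM, for the enumeration `L` of the
students, starting from all feasible individually rational matchings. -/
noncomputable def xiList (P : Prof I S) (q : S → ℕ) (L : List I) :
    Set (Matching I S) :=
  L.foldl xiStep {μ | Feasible q μ ∧ IndivRational P μ}

/-- `μ` is a possible outcome of an EAM procedure with student enumeration
`L`: it is reachable from some matching selected in the first stage by
implementing improving chains/cycles, and admits no further improving chain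
or cycle. -/
def IsEAMOutcome (P : Prof I S) (q : S → ℕ) (L : List I) (μ : Matching I S) :
    Prop :=
  ∃ μ₀ ∈ xiList P q L, Relation.ReflTransGen (ImplementStep P q) μ₀ μ ∧
    ¬ HasImpChain P q μ ∧ ¬ HasImpCycle P μ

/-- EAM mechanisms with enumeration `L`. -/
def IsEAMMech (q : S → ℕ) (L : List I) (ψ : Mechanism I S) : Prop :=
  ∀ P, IsEAMOutcome P q L (ψ P)

/-- One sub-step of Step 2 of FAM: a pair `(i, s)` violating fairness for
unassigned students is resolved by placing `i` at `s` and unassigning the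
lowest-priority student currently matched to `s`. -/
def FairStep (P : Prof I S) (pr : Prio I S) (μ μ' : Matching I S) : Prop :=
  ∃ i s j, μ i = none ∧ (P i).1 none < (P i).1 (some s) ∧ μ j = some s ∧
    pr.1 s j < pr.1 s i ∧ (∀ j', μ j' = some s → pr.1 s j ≤ pr.1 s j') ∧
    μ' = Function.update (Function.update μ j none) i (some s)

/-- FAM mechanisms: an EAM first stage followed by iterated resolution of
violations of fairness for unassigned students. -/
def IsFAMMech (q : S → ℕ) (pr : Prio I S) (L : List I) (ψ : Mechanism I S) :
    Prop :=
  ∀ P, ∃ μ₁, IsEAMOutcome P q L μ₁ ∧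
    Relation.ReflTransGen (FairStep P pr) μ₁ (ψ P) ∧
    FairForUnassigned P pr (ψ P)

/-- Individually rational mechanism (with respect to reports). -/
def IRMech (q : S → ℕ) (ψ : Mechanism I S) : Prop :=
  ∀ P, Feasible q (ψ P) ∧ IndivRational P (ψ P)

/-- MaximalMatching mechanism. -/
def MaximalMech (q : S → ℕ) (ψ : Mechanism I S) : Prop :=
  IRMech q ψ ∧ ∀ P, MaximalMatching P q (ψ P)

/-- Nash equilibrium of the preference-reporting game induced by `ψ`, with
true preferences `u`. -/
def NashEq (u : Prof I S) (ψ : Mechanism I S) (P' : Prof I S) : Prop :=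
  ∀ (i : I) (Pi'' : IndPref S),
    (u i).1 (ψ (Function.update P' i Pi'') i) ≤ (u i).1 (ψ P' i)

/-- Strategy-proofness. -/
def StrategyProof (ψ : Mechanism I S) : Prop :=
  ∀ (P : Prof I S) (i : I) (Pi' : IndPref S),
    (P i).1 (ψ (Function.update P i Pi') i) ≤ (P i).1 (ψ P i)

/-- A maximizer of `f` on the nonempty finite set `A`. -/
noncomputable def bestOf (f : Option S → ℕ) (A : Finset (Option S))
    (h : A.Nonempty) : Option S :=
  (Finset.exists_max_image A f h).choose

/-- Serial dictatorship: students pick, in the order given, their most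
preferred option among `none` and the schools with remaining capacity. -/
noncomputable def sdRun (P : Prof I S) :
    List I → (S → ℕ) → Matching I S → Matching I S
  | [], _, μ => μ
  | i :: rest, rem, μ =>
    let c := bestOf (P i).1 (insert none ((univ.filter fun s => 0 < rem s).image some))
      (insert_nonempty _ _)
    sdRun P rest (fun s => if c = some s then rem s - 1 else rem s)
      (Function.update μ i c)

/-- The serial dictatorship outcome with ordering `L` and capacities `q`. -/
noncomputable def SD (P : Prof I S) (q : S → ℕ) (L : List I) : Matching I S :=
  sdRun P L q fun _ => none


variable {I S : Type*} [Fintype I] [DecidableEq I] [Fintype S] [DecidableEq S]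

section FAMAux

variable {I S : Type*} [Fintype I] [DecidableEq I] [Fintype S] [DecidableEq S]

private lemma filter_card_comp_swap (μ : Matching I S) (i j : I)
    (p : Option S → Prop) :
    (univ.filter fun k => p (μ (Equiv.swap i j k))).card
      = (univ.filter fun k => p (μ k)).card := by
  classical
  apply Finset.card_bij (fun k _ => Equiv.swap i j k)
  · intro k hk
    simp only [mem_filter, mem_univ, true_and] at hk ⊢
    exact hk
  · intro a _ b _ h
    exact (Equiv.swap i j).injective h
  · intro m hm
    refine ⟨Equiv.swap i j m, ?_, by simp⟩
    simp only [mem_filter, mem_univ, true_and] at hm ⊢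
    simpa using hm

private lemma fairStep_props {P : Prof I S} {pr : Prio I S} {μ μ' : Matching I S}
    (h : FairStep P pr μ μ') :
    ∃ i s j, μ i = none ∧ (P i).1 none < (P i).1 (some s) ∧ μ j = some s ∧
      pr.1 s j < pr.1 s i ∧ i ≠ j ∧ μ' i = some s ∧ μ' j = none ∧
      (∀ k, k ≠ i → k ≠ j → μ' k = μ k) ∧
      (∀ k, μ' k = μ (Equiv.swap i j k)) := by
  obtain ⟨i, s, j, hi, hpref, hj, hlt, _, hdef⟩ := h
  have hij : i ≠ j := by
    intro e; rw [e, hj] at hi; simp at hi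
  have h1 : μ' i = some s := by rw [hdef]; simp
  have h2 : μ' j = none := by
    rw [hdef, Function.update_of_ne (Ne.symm hij), Function.update_self]
  have h3 : ∀ k, k ≠ i → k ≠ j → μ' k = μ k := by
    intro k hki hkj
    rw [hdef, Function.update_of_ne hki, Function.update_of_ne hkj]
  refine ⟨i, s, j, hi, hpref, hj, hlt, hij, h1, h2, h3, ?_⟩
  intro k
  rcases eq_or_ne k i with rfl | hki
  · rw [Equiv.swap_apply_left, hj, h1]
  rcases eq_or_ne k j with rfl | hkj
  · rw [Equiv.swap_apply_right, hi, h2]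
  · rw [Equiv.swap_apply_of_ne_of_ne hki hkj, h3 k hki hkj]

private noncomputable def phiFAM (pr : Prio I S) (μ : Matching I S) : ℕ :=
  ∑ k : I, (μ k).elim 0 (fun s => pr.1 s k + 1)

private lemma fairStep_card_eq {P : Prof I S} {pr : Prio I S} {μ μ' : Matching I S}
    (h : FairStep P pr μ μ') (s' : S) :
    (univ.filter fun k => μ' k = some s').card
      = (univ.filter fun k => μ k = some s').card := by
  obtain ⟨i, s, j, _, _, _, _, _, _, _, _, hswap⟩ := fairStep_props h
  apply Finset.card_bij (fun k _ => Equiv.swap i j k)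
  · intro k hk
    simp only [mem_filter, mem_univ, true_and] at hk ⊢
    rw [← hswap]; exact hk
  · intro a _ b _ hab
    exact (Equiv.swap i j).injective hab
  · intro m hm
    refine ⟨Equiv.swap i j m, ?_, by simp⟩
    simp only [mem_filter, mem_univ, true_and] at hm ⊢
    rw [hswap]; simpa using hm

private lemma fairStep_msize_eq {P : Prof I S} {pr : Prio I S} {μ μ' : Matching I S}
    (h : FairStep P pr μ μ') : msize μ' = msize μ := by
  obtain ⟨i, s, j, _, _, _, _, _, _, _, _, hswap⟩ := fairStep_props h
  unfold msize
  apply Finset.card_bij (fun k _ => Equiv.swap i j k)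
  · intro k hk
    simp only [mem_filter, mem_univ, true_and] at hk ⊢
    rw [← hswap]; exact hk
  · intro a _ b _ hab
    exact (Equiv.swap i j).injective hab
  · intro m hm
    refine ⟨Equiv.swap i j m, ?_, by simp⟩
    simp only [mem_filter, mem_univ, true_and] at hm ⊢
    rw [hswap]; simpa using hm

private lemma fairStep_phi_lt {P : Prof I S} {pr : Prio I S} {μ μ' : Matching I S}
    (h : FairStep P pr μ μ') : phiFAM pr μ < phiFAM pr μ' := by
  classical
  obtain ⟨i, s, j, hi, _, hj, hlt, hij, h1, h2, h3, _⟩ := fairStep_props h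
  have hjmem : j ∈ univ.erase i := by simp [Ne.symm hij]
  set g : I → ℕ := fun k => (μ k).elim 0 (fun s => pr.1 s k + 1) with hg
  set g' : I → ℕ := fun k => (μ' k).elim 0 (fun s => pr.1 s k + 1) with hg'
  have e1 : phiFAM pr μ = (∑ k ∈ (univ.erase i).erase j, g k + g j) + g i := by
    rw [Finset.sum_erase_add _ _ hjmem, Finset.sum_erase_add _ _ (mem_univ i)]
    rfl
  have e2 : phiFAM pr μ' = (∑ k ∈ (univ.erase i).erase j, g' k + g' j) + g' i := by
    rw [Finset.sum_erase_add _ _ hjmem, Finset.sum_erase_add _ _ (mem_univ i)]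
    rfl
  have eT : ∑ k ∈ (univ.erase i).erase j, g k = ∑ k ∈ (univ.erase i).erase j, g' k := by
    apply Finset.sum_congr rfl
    intro k hk
    simp only [mem_erase] at hk
    simp only [hg, hg', h3 k hk.2.1 hk.1]
  have egi : g i = 0 := by simp [hg, hi]
  have egj : g j = pr.1 s j + 1 := by simp [hg, hj]
  have egi' : g' i = pr.1 s i + 1 := by simp [hg', h1]
  have egj' : g' j = 0 := by simp [hg', h2]
  rw [e1, e2, ← eT, egi, egj, egi', egj']
  omega

private lemma phiFAM_le (pr : Prio I S) (μ : Matching I S) :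
    phiFAM pr μ ≤ ∑ k : I, ((univ.sup fun s => pr.1 s k) + 1) := by
  apply Finset.sum_le_sum
  intro k _
  cases hμk : μ k with
  | none => simp
  | some s =>
    simp only [Option.elim]
    exact Nat.add_le_add_right (Finset.le_sup (f := fun s => pr.1 s k) (mem_univ s)) 1

private lemma exists_fair_terminal (P : Prof I S) (pr : Prio I S) :
    ∀ (n : ℕ) (μ : Matching I S),
      (∑ k : I, ((univ.sup fun s => pr.1 s k) + 1)) - phiFAM pr μ ≤ n →
      ∃ ν, Relation.ReflTransGen (FairStep P pr) μ ν ∧ FairForUnassigned P pr ν := by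
  intro n
  induction n with
  | zero =>
    intro μ hb
    by_cases hfair : FairForUnassigned P pr μ
    · exact ⟨μ, Relation.ReflTransGen.refl, hfair⟩
    · exfalso
      rw [FairForUnassigned, not_not] at hfair
      obtain ⟨i, s, j, hi, hpref, hj, hlt⟩ := hfair
      obtain ⟨j₀, hj₀mem, hj₀min⟩ := Finset.exists_min_image
        (univ.filter fun j' => μ j' = some s) (pr.1 s)
        ⟨j, by simp [hj]⟩
      simp only [mem_filter, mem_univ, true_and] at hj₀mem
      have hstep : FairStep P pr μ
          (Function.update (Function.update μ j₀ none) i (some s)) :=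
        ⟨i, s, j₀, hi, hpref, hj₀mem,
          lt_of_le_of_lt (hj₀min j (by simp [hj])) hlt,
          fun j' hj' => hj₀min j' (by simp [hj']), rfl⟩
      have h1 := fairStep_phi_lt hstep
      have h2 := phiFAM_le (I := I) pr
        (Function.update (Function.update μ j₀ none) i (some s))
      omega
  | succ n ih =>
    intro μ hb
    by_cases hfair : FairForUnassigned P pr μ
    · exact ⟨μ, Relation.ReflTransGen.refl, hfair⟩
    · rw [FairForUnassigned, not_not] at hfair
      obtain ⟨i, s, j, hi, hpref, hj, hlt⟩ := hfair
      obtain ⟨j₀, hj₀mem, hj₀min⟩ := Finset.exists_min_image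
        (univ.filter fun j' => μ j' = some s) (pr.1 s)
        ⟨j, by simp [hj]⟩
      simp only [mem_filter, mem_univ, true_and] at hj₀mem
      set μ' := Function.update (Function.update μ j₀ none) i (some s) with hμ'
      have hstep : FairStep P pr μ μ' :=
        ⟨i, s, j₀, hi, hpref, hj₀mem,
          lt_of_le_of_lt (hj₀min j (by simp [hj])) hlt,
          fun j' hj' => hj₀min j' (by simp [hj']), rfl⟩
      have h1 := fairStep_phi_lt hstep
      obtain ⟨ν, hν1, hν2⟩ := ih μ' (by omega)
      exact ⟨ν, Relation.ReflTransGen.head hstep hν1, hν2⟩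

private lemma fairStep_preserves {P : Prof I S} {pr : Prio I S} {q : S → ℕ}
    {μ μ' : Matching I S} (h : FairStep P pr μ μ')
    (hF : Feasible q μ) (hIR : IndivRational P μ) :
    Feasible q μ' ∧ IndivRational P μ' ∧ msize μ' = msize μ := by
  obtain ⟨i, s, j, hi, hpref, hj, hlt, hij, h1, h2, h3, _⟩ := fairStep_props h
  refine ⟨?_, ?_, ?_⟩
  · intro s'
    exact le_of_eq_of_le (fairStep_card_eq h s') (hF s')
  · intro k
    rcases eq_or_ne k i with rfl | hki
    · rw [h1]; exact le_of_lt (by simpa [hi] using hpref)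
    rcases eq_or_ne k j with rfl | hkj
    · rw [h2]
    · rw [h3 k hki hkj]; exact hIR k
  · exact fairStep_msize_eq h


end FAMAux

/-- starting from any maximal individually rational matching,
the fairness step of FAM terminates, and every terminal matching (one that
is fair for unassigned students) reached by iterated fairness steps is
individually rational, feasible, maximal, and fair for unassigned
students. -/
theorem FAM_ir_maximal_fair
    (P : Prof I S) (pr : Prio I S) (q : S → ℕ) (μ₀ : Matching I S)
    (hF : Feasible q μ₀) (hIR : IndivRational P μ₀)
    (hMax : MaximalMatching P q μ₀) :
    (∃ μ, Relation.ReflTransGen (FairStep P pr) μ₀ μ ∧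
      FairForUnassigned P pr μ) ∧
    ∀ μ, Relation.ReflTransGen (FairStep P pr) μ₀ μ →
      FairForUnassigned P pr μ →
      Feasible q μ ∧ IndivRational P μ ∧ MaximalMatching P q μ ∧
        FairForUnassigned P pr μ := by
  constructor
  · exact exists_fair_terminal P pr 
      ((∑ k : I, ((univ.sup fun s => pr.1 s k) + 1)) - phiFAM pr μ₀) μ₀ le_rfl
  · intro μ hreach hfair
    have key : Feasible q μ ∧ IndivRational P μ ∧ msize μ = msize μ₀ := by
      clear hfair
      induction hreach with
      | refl => exact ⟨hF, hIR, rfl⟩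
      | tail h' step ih =>
        obtain ⟨ihF, ihIR, ihm⟩ := ih
        obtain ⟨pF, pIR, pm⟩ := fairStep_preserves step ihF ihIR
        exact ⟨pF, pIR, pm.trans ihm⟩
    obtain ⟨kF, kIR, km⟩ := key
    refine ⟨kF, kIR, ?_, hfair⟩
    intro μ'' hF'' hIR''
    rw [km]
    exact hMax μ'' hF'' hIR''
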